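/- Let I be a nonempty finite set, d ∈ ℕ^I a nonzero vector, and θ ∈ ℝ^I. Then there exists an integral weight ω ∈ ℤ^I such that for every nonzero e ∈ ℕ^I with e_i ≤ d_i for all i ∈ I, one has sgn(μ_ω(d) − μ_ω(e)) = sgn(μ_θ(d) − μ_θ(e)). (This is the statement that every facet of ℝ^I with respect to the hyperplane arrangement ℋ(d) contains an integral weight, expressed via the sign characterization of facets.) -/

import Mathlib

/-- The slope `μ_θ(d)` of a dimension vector `d ∈ ℕ^I` with respect to a weight
`θ ∈ ℝ^I`: `μ_θ(d) = (∑ i, θ i * d i) / (∑ i, d i)`. -/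
noncomputable def muSlopeVec {I : Type*} [Fintype I] (θ : I → ℝ) (d : I → ℕ) : ℝ :=
  (∑ i, θ i * (d i : ℝ)) / (∑ i, (d i : ℝ))

private lemma sign_div_pos_aux {x c : ℝ} (hc : 0 < c) :
    Real.sign (x / c) = Real.sign x := by
  rcases lt_trichotomy x 0 with h | h | h
  · rw [Real.sign_of_neg h, Real.sign_of_neg (div_neg_of_neg_of_pos h hc)]
  · simp [h]
  · rw [Real.sign_of_pos h, Real.sign_of_pos (div_pos h hc)]

/-- for every nonzero `d ∈ ℕ^I` and every `θ ∈ ℝ^I` there exists an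
integral weight `ω ∈ ℤ^I` such that for every nonzero `e ∈ ℕ^I` with `e ≤ d` one has
`sgn(μ_ω(d) − μ_ω(e)) = sgn(μ_θ(d) − μ_θ(e))`: every facet of the hyperplane arrangement
`ℋ(d)` contains an integral weight. -/
theorem exists_integral_weight_in_facet
    {I : Type*} [Fintype I] [Nonempty I] (d : I → ℕ) (hd : d ≠ 0) (θ : I → ℝ) :
    ∃ ω : I → ℤ, ∀ e : I → ℕ, e ≠ 0 → (∀ i, e i ≤ d i) →
      Real.sign (muSlopeVec (fun i => (ω i : ℝ)) d - muSlopeVec (fun i => (ω i : ℝ)) e) =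
        Real.sign (muSlopeVec θ d - muSlopeVec θ e) := by
  classical
  -- positivity of sums
  have hsum_pos : ∀ e : I → ℕ, e ≠ 0 → (0 : ℝ) < ∑ i, (e i : ℝ) := by
    intro e he
    have h1 : ∑ i, e i ≠ 0 := by
      intro h
      apply he
      funext i
      exact Finset.sum_eq_zero_iff.mp h i (Finset.mem_univ i)
    have h2 : (0 : ℕ) < ∑ i, e i := Nat.pos_of_ne_zero h1
    calc (0 : ℝ) < ((∑ i, e i : ℕ) : ℝ) := by exact_mod_cast h2
      _ = ∑ i, (e i : ℝ) := by push_cast; ring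
  have hsd : (0 : ℝ) < ∑ i, (d i : ℝ) := hsum_pos d hd
  -- the integral linear forms
  set c : (I → ℕ) → I → ℤ :=
    fun e i => (d i : ℤ) * (∑ j, (e j : ℤ)) - (e i : ℤ) * (∑ j, (d j : ℤ)) with hc_def
  set F : (I → ℝ) → (I → ℕ) → ℝ := fun x e => ∑ i, x i * ((c e i : ℤ) : ℝ) with hF_def
  -- slope difference in terms of F
  have hmu : ∀ (x : I → ℝ) (e : I → ℕ), e ≠ 0 →
      muSlopeVec x d - muSlopeVec x e
        = F x e / ((∑ i, (d i : ℝ)) * (∑ i, (e i : ℝ))) := by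
    intro x e he
    have hse := hsum_pos e he
    unfold muSlopeVec
    rw [div_sub_div _ _ (ne_of_gt hsd) (ne_of_gt hse)]
    congr 1
    rw [hF_def]
    simp only [hc_def]
    push_cast
    rw [Finset.sum_mul, Finset.mul_sum, ← Finset.sum_sub_distrib]
    exact Finset.sum_congr rfl fun i _ => by ring
  -- the rational span of the θ i
  set V : Submodule ℚ ℝ := Submodule.span ℚ (Set.range θ) with hV_def
  haveI : FiniteDimensional ℚ V :=
    FiniteDimensional.span_of_finite ℚ (Set.finite_range θ)
  set κ := Module.Free.ChooseBasisIndex ℚ V with hκ_def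
  set b : Module.Basis κ ℚ V := Module.Free.chooseBasis ℚ V with hb_def
  have hmemV : ∀ i, θ i ∈ V := fun i =>
    Submodule.subset_span (Set.mem_range_self i)
  set q : I → κ → ℚ := fun i k => b.repr ⟨θ i, hmemV i⟩ k with hq_def
  have hθ : ∀ i, θ i = ∑ k, (q i k : ℝ) * ((b k : ℝ)) := by
    intro i
    have := b.sum_repr ⟨θ i, hmemV i⟩
    have := congrArg (Subtype.val : V → ℝ) this
    simp only [Submodule.coe_sum] at this
    rw [← this]
    exact Finset.sum_congr rfl fun k _ => by
      rw [Submodule.coe_smul, Rat.smul_def]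
  -- clear denominators of the coordinates
  set M : ℕ := ∏ i, ∏ k, (q i k).den with hM_def
  have hMpos : 0 < M := Finset.prod_pos fun i _ =>
    Finset.prod_pos fun k _ => (q i k).pos
  have hden : ∀ i k, ((q i k).den : ℤ) ∣ (M : ℤ) := by
    intro i k
    have h1 : (q i k).den ∣ ∏ k', (q i k').den :=
      Finset.dvd_prod_of_mem _ (Finset.mem_univ k)
    have h2 : (∏ k', (q i k').den) ∣ M :=
      Finset.dvd_prod_of_mem (fun i' => ∏ k', (q i' k').den) (Finset.mem_univ i)
    exact_mod_cast h1.trans h2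
  have hex : ∀ i k, ∃ z : ℤ, (z : ℚ) = q i k * (M : ℚ) := by
    intro i k
    obtain ⟨cc, hcc⟩ := hden i k
    refine ⟨(q i k).num * cc, ?_⟩
    have hM2 : (M : ℚ) = ((q i k).den : ℚ) * (cc : ℚ) := by
      exact_mod_cast congrArg (fun z : ℤ => (z : ℚ)) hcc
    have hden0 : ((q i k).den : ℚ) ≠ 0 := by
      exact_mod_cast (q i k).den_nz
    rw [hM2, ← mul_assoc, Rat.mul_den_eq_num]
    push_cast
    ring
  choose p hp using hex
  have hpR : ∀ i k, ((p i k : ℤ) : ℝ) = (q i k : ℝ) * (M : ℝ) := by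
    intro i k
    have := congrArg (fun x : ℚ => (x : ℝ)) (hp i k)
    push_cast at this ⊢
    exact this
  have hMθ : ∀ i, (M : ℝ) * θ i = ∑ k, ((p i k : ℤ) : ℝ) * (b k : ℝ) := by
    intro i
    rw [hθ i, Finset.mul_sum]
    exact Finset.sum_congr rfl fun k _ => by rw [hpR]; ring
  -- integral coefficients of M * F θ e over the basis
  set a : (I → ℕ) → κ → ℤ := fun e k => ∑ i, p i k * c e i with ha_def
  have hMF : ∀ e, (M : ℝ) * F θ e = ∑ k, ((a e k : ℤ) : ℝ) * (b k : ℝ) := by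
    intro e
    rw [hF_def]
    simp only
    rw [Finset.mul_sum]
    have h1 : ∀ i, (M : ℝ) * (θ i * ((c e i : ℤ) : ℝ))
        = ∑ k, ((p i k : ℤ) : ℝ) * (b k : ℝ) * ((c e i : ℤ) : ℝ) := by
      intro i
      rw [show (M : ℝ) * (θ i * ((c e i : ℤ) : ℝ)) = ((M : ℝ) * θ i) * ((c e i : ℤ) : ℝ) by ring,
        hMθ i, Finset.sum_mul]
    rw [Finset.sum_congr rfl fun i _ => h1 i, Finset.sum_comm]
    refine Finset.sum_congr rfl fun k _ => ?_
    rw [ha_def]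
    push_cast
    rw [Finset.sum_mul]
    exact Finset.sum_congr rfl fun i _ => by ring
  -- vanishing of F θ e forces vanishing of all coefficients
  have hzero : ∀ e, F θ e = 0 → ∀ k, a e k = 0 := by
    intro e hFe k
    have hu : (∑ k', ((a e k' : ℚ)) • b k' : V) = 0 := by
      apply Subtype.ext
      simp only [Submodule.coe_sum, Submodule.coe_smul, Rat.smul_def, ZeroMemClass.coe_zero]
      have : ∑ k', ((a e k' : ℚ) : ℝ) * (b k' : ℝ) = (M : ℝ) * F θ e := by
        rw [hMF e]
        exact Finset.sum_congr rfl fun k' _ => by push_cast; ring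
      rw [this, hFe, mul_zero]
    have := congrArg (fun v => b.repr v k) hu
    simp only [map_zero, Finsupp.coe_zero, Pi.zero_apply] at this
    rw [Module.Basis.repr_sum_self] at this
    exact_mod_cast this
  -- the finite set of relevant dimension vectors
  have hfin : {e : I → ℕ | ∀ i, e i ≤ d i}.Finite := by
    have : {e : I → ℕ | ∀ i, e i ≤ d i} = Set.pi Set.univ fun i => Set.Iic (d i) := by
      ext e; simp [Set.mem_pi, Set.mem_Iic, Pi.le_def]
    rw [this]
    exact Set.Finite.pi fun i => Set.finite_Iic (d i)
  set S : Finset (I → ℕ) := hfin.toFinset with hS_def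
  have hS_ne : S.Nonempty := ⟨0, by simp [hS_def, Set.Finite.mem_toFinset]⟩
  set B : (I → ℕ) → ℝ := fun e => (∑ k, |((a e k : ℤ) : ℝ)|) / 2 with hB_def
  set g : (I → ℕ) → ℝ := fun e => B e / ((M : ℝ) * |F θ e|) with hg_def
  obtain ⟨T, hT⟩ := exists_nat_gt (S.sup' hS_ne g)
  have hTg : ∀ e ∈ S, g e < (T : ℝ) := fun e he =>
    lt_of_le_of_lt (Finset.le_sup' g he) hT
  -- the integral weight
  refine ⟨fun i => ∑ k, p i k * round ((T : ℝ) * (b k : ℝ)), ?_⟩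
  set ω : I → ℤ := fun i => ∑ k, p i k * round ((T : ℝ) * (b k : ℝ)) with hω_def
  set ωR : I → ℝ := fun i => ((ω i : ℤ) : ℝ) with hωR_def
  have hFω : ∀ e, F ωR e = ∑ k, ((a e k : ℤ) : ℝ) * ((round ((T : ℝ) * (b k : ℝ)) : ℤ) : ℝ) := by
    intro e
    rw [hF_def]
    simp only [hωR_def, hω_def]
    have h1 : ∀ i, ((∑ k, p i k * round ((T : ℝ) * (b k : ℝ)) : ℤ) : ℝ) * ((c e i : ℤ) : ℝ)
        = ∑ k, ((p i k : ℤ) : ℝ) * ((round ((T : ℝ) * (b k : ℝ)) : ℤ) : ℝ) * ((c e i : ℤ) : ℝ) := by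
      intro i
      push_cast
      rw [Finset.sum_mul]
    rw [Finset.sum_congr rfl fun i _ => h1 i, Finset.sum_comm]
    refine Finset.sum_congr rfl fun k _ => ?_
    rw [ha_def]
    push_cast
    rw [Finset.sum_mul]
    exact Finset.sum_congr rfl fun i _ => by ring
  -- approximation bound
  have hbound : ∀ e, |F ωR e - (T : ℝ) * ((M : ℝ) * F θ e)| ≤ B e := by
    intro e
    rw [hFω e, hMF e, Finset.mul_sum, ← Finset.sum_sub_distrib]
    refine le_trans (Finset.abs_sum_le_sum_abs _ _) ?_
    rw [hB_def]
    simp only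
    rw [Finset.sum_div]
    refine Finset.sum_le_sum fun k _ => ?_
    have h2 : ((a e k : ℤ) : ℝ) * ((round ((T : ℝ) * (b k : ℝ)) : ℤ) : ℝ)
        - (T : ℝ) * (((a e k : ℤ) : ℝ) * (b k : ℝ))
        = ((a e k : ℤ) : ℝ) * (((round ((T : ℝ) * (b k : ℝ)) : ℤ) : ℝ) - (T : ℝ) * (b k : ℝ)) := by
      ring
    rw [h2, abs_mul]
    have h3 : |((round ((T : ℝ) * (b k : ℝ)) : ℤ) : ℝ) - (T : ℝ) * (b k : ℝ)| ≤ 1 / 2 := by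
      rw [abs_sub_comm]
      exact abs_sub_round _
    calc |((a e k : ℤ) : ℝ)| * |((round ((T : ℝ) * (b k : ℝ)) : ℤ) : ℝ) - (T : ℝ) * (b k : ℝ)|
        ≤ |((a e k : ℤ) : ℝ)| * (1 / 2) := by
          exact mul_le_mul_of_nonneg_left h3 (abs_nonneg _)
      _ = |((a e k : ℤ) : ℝ)| / 2 := by ring
  -- conclusion
  intro e he hle
  have heS : e ∈ S := by
    rw [hS_def, Set.Finite.mem_toFinset]
    exact hle
  rw [hmu θ e he, hmu ωR e he, sign_div_pos_aux (mul_pos hsd (hsum_pos e he)),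
    sign_div_pos_aux (mul_pos hsd (hsum_pos e he))]
  have hMpos' : (0 : ℝ) < (M : ℝ) := by exact_mod_cast hMpos
  rcases lt_trichotomy (F θ e) 0 with hF0 | hF0 | hF0
  · -- negative case
    have habs : |F θ e| = -(F θ e) := abs_of_neg hF0
    have hT' : B e < (T : ℝ) * ((M : ℝ) * |F θ e|) := by
      have h1 : 0 < (M : ℝ) * |F θ e| := mul_pos hMpos' (abs_pos.mpr (ne_of_lt hF0))
      have := hTg e heS
      rw [hg_def] at this
      simp only at this
      exact (div_lt_iff₀ h1).mp this
    have : F ωR e < 0 := by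
      have h4 := hbound e
      have h5 : F ωR e ≤ (T : ℝ) * ((M : ℝ) * F θ e) + B e := by
        have := abs_le.mp h4
        linarith [this.2]
      have h6 : (T : ℝ) * ((M : ℝ) * F θ e) = -((T : ℝ) * ((M : ℝ) * |F θ e|)) := by
        rw [habs]; ring
      linarith
    rw [Real.sign_of_neg this, Real.sign_of_neg hF0]
  · -- zero case
    have : F ωR e = 0 := by
      rw [hFω e]
      refine Finset.sum_eq_zero fun k _ => ?_
      rw [hzero e hF0 k]
      simp
    rw [this, hF0]
  · -- positive case
    have habs : |F θ e| = F θ e := abs_of_pos hF0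
    have hT' : B e < (T : ℝ) * ((M : ℝ) * |F θ e|) := by
      have h1 : 0 < (M : ℝ) * |F θ e| := mul_pos hMpos' (abs_pos.mpr (ne_of_gt hF0))
      have := hTg e heS
      rw [hg_def] at this
      simp only at this
      exact (div_lt_iff₀ h1).mp this
    have : 0 < F ωR e := by
      have h4 := hbound e
      have h5 : (T : ℝ) * ((M : ℝ) * F θ e) - B e ≤ F ωR e := by
        have := abs_le.mp h4
        linarith [this.1]
      rw [habs] at hT'
      linarith
    rw [Real.sign_of_pos this, Real.sign_of_pos hF0]
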